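/- Let Q be a C¹ function near w ∈ ℝ^d with values in the N×N complex matrices and let ν ∈ ℝ^d. If Q is quasi-symmetric at w with respect to ν, then −Q* (pointwise conjugate transpose) is quasi-symmetric at w with respect to −ν. Moreover, if E is C¹ near w with E(w) invertible, then the pointwise product E*QE is quasi-symmetric at w with respect to ν. -/

import Mathlib

open Matrix

/-- The directional derivative `∂_ν Q(w)` of a matrix-valued function, taken entrywise. -/
noncomputable def dirDeriv {d N : ℕ} (Q : EuclideanSpace ℝ (Fin d) → Matrix (Fin N) (Fin N) ℂ)
    (w ν : EuclideanSpace ℝ (Fin d)) : Matrix (Fin N) (Fin N) ℂ :=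
  fun i j => deriv (fun t : ℝ => Q (w + t • ν) i j) 0

/-- `Q` is quasi-symmetric at `w` with respect to the direction `ν` if `Im⟨Q(w)u, u⟩ ≥ 0` for
all `u ∈ ℂ^N` and there are constants `c > 0`, `C ≥ 0` with
`Re⟨∂_ν Q(w)u, u⟩ ≥ c‖u‖² − C‖Q(w)u‖²` for all `u ∈ ℂ^N`.
Here `⟨a, b⟩ = ⟪b, a⟫_ℂ` is linear in the first argument. -/
noncomputable def IsQuasiSymmetricAt {d N : ℕ}
    (Q : EuclideanSpace ℝ (Fin d) → Matrix (Fin N) (Fin N) ℂ)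
    (w ν : EuclideanSpace ℝ (Fin d)) : Prop :=
  (∀ u : EuclideanSpace ℂ (Fin N),
      0 ≤ (inner ℂ u (Matrix.toEuclideanLin (Q w) u) : ℂ).im) ∧
  ∃ c : ℝ, 0 < c ∧ ∃ C : ℝ, 0 ≤ C ∧
    ∀ u : EuclideanSpace ℂ (Fin N),
      c * ‖u‖ ^ 2 - C * ‖Matrix.toEuclideanLin (Q w) u‖ ^ 2 ≤
        (inner ℂ u (Matrix.toEuclideanLin (dirDeriv Q w ν) u) : ℂ).re

section Helpers

open ComplexConjugate

variable {N : ℕ}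

local notation "T" => Matrix.toEuclideanLin

lemma T_mul (A B : Matrix (Fin N) (Fin N) ℂ) (u : EuclideanSpace ℂ (Fin N)) :
    T (A * B) u = T A (T B u) := by
  simp [Matrix.toEuclideanLin_apply, Matrix.mulVec_mulVec]

lemma T_one (u : EuclideanSpace ℂ (Fin N)) : T (1 : Matrix (Fin N) (Fin N) ℂ) u = u := by
  simp [Matrix.toEuclideanLin_apply]

lemma T_adj (A : Matrix (Fin N) (Fin N) ℂ) (x y : EuclideanSpace ℂ (Fin N)) :
    (inner ℂ (T Aᴴ x) y : ℂ) = inner ℂ x (T A y) := by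
  rw [Matrix.toEuclideanLin_conjTranspose_eq_adjoint, LinearMap.adjoint_inner_left]

lemma T_adj' (A : Matrix (Fin N) (Fin N) ℂ) (x y : EuclideanSpace ℂ (Fin N)) :
    (inner ℂ x (T Aᴴ y) : ℂ) = inner ℂ (T A x) y := by
  rw [← inner_conj_symm, T_adj, inner_conj_symm]

lemma inner_conjTranspose (A : Matrix (Fin N) (Fin N) ℂ) (x : EuclideanSpace ℂ (Fin N)) :
    (inner ℂ x (T Aᴴ x) : ℂ) = conj (inner ℂ x (T A x) : ℂ) := by
  rw [T_adj', inner_conj_symm]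

lemma amgm (K δ a b : ℝ) (hδ : 0 < δ) : K*(a*b) ≤ δ*a^2 + K^2/(4*δ)*b^2 := by
  have h : K^2 = 4*δ*(K^2/(4*δ)) := by field_simp
  nlinarith [sq_nonneg (2*δ*a - K*b), sq_nonneg b, hδ.le]

lemma T_bound (A : Matrix (Fin N) (Fin N) ℂ) :
    ∃ K : ℝ, 0 < K ∧ ∀ u : EuclideanSpace ℂ (Fin N), ‖T A u‖ ≤ K * ‖u‖ := by
  refine ⟨‖LinearMap.toContinuousLinearMap (T A)‖ + 1, by positivity, fun u => ?_⟩
  calc ‖T A u‖ = ‖LinearMap.toContinuousLinearMap (T A) u‖ := rfl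
    _ ≤ ‖LinearMap.toContinuousLinearMap (T A)‖ * ‖u‖ := ContinuousLinearMap.le_opNorm _ _
    _ ≤ _ := by nlinarith [norm_nonneg u, norm_nonneg (LinearMap.toContinuousLinearMap (T A))]

lemma skew_bound (A : Matrix (Fin N) (Fin N) ℂ) (KG : ℝ) (hKG0 : 0 ≤ KG)
    (hKG : ∀ u : EuclideanSpace ℂ (Fin N), ‖T (A - Aᴴ) u‖ ≤ KG * ‖u‖)
    (him : ∀ x : EuclideanSpace ℂ (Fin N), 0 ≤ (inner ℂ x (T A x) : ℂ).im)
    (v : EuclideanSpace ℂ (Fin N)) :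
    ‖T (A - Aᴴ) v‖ ^ 2 ≤ 2 * KG * (inner ℂ v (T A v) : ℂ).im := by
  set S : Matrix (Fin N) (Fin N) ℂ := ((-Complex.I)/2) • (A - Aᴴ) with hSdef
  have hS : Sᴴ = S := by
    rw [hSdef, Matrix.conjTranspose_smul, Matrix.conjTranspose_sub]
    have h1 : star ((-Complex.I)/2) = Complex.I/2 := by
      rw [star_div₀, star_neg, Complex.star_def, Complex.conj_I, neg_neg]
      congr 1
      exact Complex.conj_ofNat 2
    rw [Matrix.conjTranspose_conjTranspose, h1, show Aᴴ - A = -(A - Aᴴ) from (neg_sub _ _).symm,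
      smul_neg, ← neg_smul, neg_div]
  have hTS : ∀ x : EuclideanSpace ℂ (Fin N), T S x = ((-Complex.I)/2) • (T (A - Aᴴ) x) := by
    intro x; rw [hSdef, LinearEquiv.map_smul]; rfl
  have hφ : ∀ x : EuclideanSpace ℂ (Fin N),
      (inner ℂ x (T S x) : ℂ) = ((inner ℂ x (T A x) : ℂ).im : ℂ) := by
    intro x
    rw [hTS, inner_smul_right, map_sub, LinearMap.sub_apply, inner_sub_right,
      inner_conjTranspose, Complex.sub_conj]
    push_cast
    ring_nf
    simp [Complex.ext_iff]
  have hsym : ∀ x y : EuclideanSpace ℂ (Fin N),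
      (inner ℂ (T S x) y : ℂ) = inner ℂ x (T S y) := by
    intro x y; conv_lhs => rw [← hS]
    exact T_adj S x y
  set y := T S v with hy
  set q := ‖y‖^2 with hq
  set p := (inner ℂ v (T A v) : ℂ).im with hp
  set r := (inner ℂ (y : EuclideanSpace ℂ (Fin N)) (T S y) : ℂ).re with hr'
  have hp0 : 0 ≤ p := him v
  have hpS : (inner ℂ v (T S v) : ℂ) = (p : ℂ) := hφ v
  have quad : ∀ t : ℝ, 0 ≤ r * (t*t) + (2*q) * t + p := by
    intro t
    have hx : (0:ℝ) ≤ (inner ℂ (v + (t:ℂ) • y) ((T A) (v + (t:ℂ) • y)) : ℂ).im := him _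
    have hφx := hφ (v + (t:ℂ) • y)
    have h1 : (inner ℂ v (T S y) : ℂ) = (q : ℂ) := by
      rw [← hsym, ← hy, inner_self_eq_norm_sq_to_K, hq]; norm_cast
    have h2 : (inner ℂ (y : EuclideanSpace ℂ (Fin N)) (T S v) : ℂ) = (q : ℂ) := by
      rw [← hy, inner_self_eq_norm_sq_to_K, hq]; norm_cast
    have hexp : (inner ℂ (v + (t:ℂ) • y) (T S (v + (t:ℂ) • y)) : ℂ)
        = ((p + 2*t*q : ℝ) : ℂ) + ((t*t : ℝ) : ℂ) * inner ℂ y (T S y) := by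
      have h3 : ∀ z : EuclideanSpace ℂ (Fin N), T S ((t:ℂ)•z) = (t:ℂ) • T S z :=
        fun z => LinearMap.map_smul (Matrix.toEuclideanLin S) _ _
      simp only [map_add, LinearMap.add_apply, h3,
        inner_add_left, inner_add_right, inner_smul_left, inner_smul_right,
        hpS, h1, h2, Complex.conj_ofReal]
      push_cast
      ring
    have hre : 0 ≤ (inner ℂ (v + (t:ℂ) • y) (T S (v + (t:ℂ) • y)) : ℂ).re := by
      rw [hφx]; exact_mod_cast hx
    rw [hexp] at hre
    simp only [Complex.add_re, Complex.ofReal_re, Complex.re_ofReal_mul] at hre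
    rw [← hr'] at hre
    linarith
  have hdisc := discrim_le_zero quad
  have hrle : r ≤ (KG/2) * q := by
    have h1 : ‖T S y‖ ≤ (KG/2) * ‖y‖ := by
      rw [hTS, norm_smul]
      have h2 : ‖(-Complex.I)/2‖ = 1/2 := by simp
      rw [h2]
      have := hKG y
      nlinarith [norm_nonneg (T (A - Aᴴ) y)]
    calc r ≤ ‖(inner ℂ (y:EuclideanSpace ℂ (Fin N)) (T S y) : ℂ)‖ := Complex.re_le_norm _
      _ ≤ ‖y‖ * ‖T S y‖ := norm_inner_le_norm _ _
      _ ≤ ‖y‖ * ((KG/2) * ‖y‖) := mul_le_mul_of_nonneg_left h1 (norm_nonneg y)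
      _ = (KG/2) * q := by rw [hq]; ring
  rw [discrim] at hdisc
  have hq0 : 0 ≤ q := sq_nonneg _
  have hqle : q^2 ≤ (KG/2) * q * p := by nlinarith [mul_le_mul_of_nonneg_right hrle hp0]
  have hnorm : ‖T (A - Aᴴ) v‖^2 = 4 * q := by
    have h1 : T (A - Aᴴ) v = (2*Complex.I) • (y : EuclideanSpace ℂ (Fin N)) := by
      rw [hy, hTS, smul_smul]
      have : (2*Complex.I) * ((-Complex.I)/2) = 1 := by
        ring_nf
        simp [Complex.I_sq]
      rw [this, one_smul]
    rw [h1, norm_smul]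
    have h2 : ‖(2*Complex.I : ℂ)‖ = 2 := by simp
    rw [h2, hq]
    ring
  rw [hnorm]
  clear_value y q p r
  rcases eq_or_lt_of_le hq0 with h | h
  · nlinarith
  · nlinarith [hqle, mul_pos h h]

lemma hasDerivAt_line {d : ℕ} {f : EuclideanSpace ℝ (Fin d) → ℂ} {w : EuclideanSpace ℝ (Fin d)}
    (hf : ContDiffAt ℝ 1 f w) (ν : EuclideanSpace ℝ (Fin d)) :
    HasDerivAt (fun t : ℝ => f (w + t • ν)) (deriv (fun t : ℝ => f (w + t • ν)) 0) 0 := by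
  have hline : DifferentiableAt ℝ (fun t : ℝ => w + t • ν) 0 :=
    (differentiableAt_id.smul_const ν).const_add w
  have hfd : DifferentiableAt ℝ f ((fun t : ℝ => w + t • ν) 0) := by
    rw [show (fun t : ℝ => w + t • ν) 0 = w by simp]
    exact hf.differentiableAt one_ne_zero
  exact (hfd.comp 0 hline).hasDerivAt

lemma dirDeriv_negstar {d : ℕ} (Q : EuclideanSpace ℝ (Fin d) → Matrix (Fin N) (Fin N) ℂ)
    (w ν : EuclideanSpace ℝ (Fin d))
    (hQ : ∀ i j, ContDiffAt ℝ 1 (fun x => Q x i j) w) :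
    dirDeriv (fun x => -(Q x)ᴴ) w (-ν) = (dirDeriv Q w ν)ᴴ := by
  funext i j
  show deriv (fun t : ℝ => (-(Q (w + t • (-ν)))ᴴ) i j) 0
      = star (deriv (fun t : ℝ => Q (w + t • ν) j i) 0)
  have hg := hasDerivAt_line (hQ j i) ν
  set D := deriv (fun t : ℝ => Q (w + t • ν) j i) 0 with hD
  have hneg : HasDerivAt (fun t : ℝ => (-t : ℝ)) (-1) 0 := by
    exact hasDerivAt_neg' 0
  have hcomp : HasDerivAt (fun t : ℝ => Q (w + -(t • ν)) j i) (-D) 0 := by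
    have hg' : HasDerivAt (fun s : ℝ => Q (w + s • ν) j i) D (-(0:ℝ)) := by
      simpa using hg
    have h2 := HasDerivAt.scomp (0:ℝ) hg' hneg
    have heq2 : ((fun s : ℝ => Q (w + s • ν) j i) ∘ Neg.neg)
        = fun t : ℝ => Q (w + -(t • ν)) j i := by
      funext t
      simp [Function.comp, neg_smul]
    rw [heq2] at h2
    simpa using h2
  have heq : (fun t : ℝ => (-(Q (w + t • (-ν)))ᴴ) i j)
      = fun t : ℝ => -(star (Q (w + -(t • ν)) j i)) := by
    funext t
    simp [Matrix.neg_apply, Matrix.conjTranspose_apply, smul_neg, neg_smul]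
  rw [heq]
  have : HasDerivAt (fun t : ℝ => -(star (Q (w + -(t • ν)) j i))) (-(star (-D))) 0 :=
    hcomp.star.neg
  rw [this.deriv]
  simp

lemma dirDeriv_EQE {d : ℕ} (Q E : EuclideanSpace ℝ (Fin d) → Matrix (Fin N) (Fin N) ℂ)
    (w ν : EuclideanSpace ℝ (Fin d))
    (hQ : ∀ i j, ContDiffAt ℝ 1 (fun x => Q x i j) w)
    (hE : ∀ i j, ContDiffAt ℝ 1 (fun x => E x i j) w) :
    dirDeriv (fun x => (E x)ᴴ * Q x * E x) w ν
      = (dirDeriv E w ν)ᴴ * Q w * E w + (E w)ᴴ * (dirDeriv Q w ν) * E w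
        + (E w)ᴴ * Q w * (dirDeriv E w ν) := by
  funext i j
  have hq' : ∀ k l, HasDerivAt (fun t : ℝ => Q (w + t • ν) k l) (dirDeriv Q w ν k l) 0 :=
    fun k l => hasDerivAt_line (hQ k l) ν
  have he' : ∀ k l, HasDerivAt (fun t : ℝ => E (w + t • ν) k l) (dirDeriv E w ν k l) 0 :=
    fun k l => hasDerivAt_line (hE k l) ν
  have hkl : ∀ l, HasDerivAt
      (fun t : ℝ => ∑ k, star (E (w + t • ν) k i) * Q (w + t • ν) k l)
      (∑ k, (star (dirDeriv E w ν k i) * Q w k l + star (E w k i) * dirDeriv Q w ν k l)) 0 := by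
    intro l
    refine HasDerivAt.fun_sum fun k _ => ?_
    have h := ((he' k i).star).mul (hq' k l)
    simp only [zero_smul, add_zero] at h
    exact h
  have htot : HasDerivAt
      (fun t : ℝ => ∑ l, (∑ k, star (E (w + t • ν) k i) * Q (w + t • ν) k l) * E (w + t • ν) l j)
      (∑ l, ((∑ k, (star (dirDeriv E w ν k i) * Q w k l + star (E w k i) * dirDeriv Q w ν k l))
          * E w l j
        + (∑ k, star (E w k i) * Q w k l) * dirDeriv E w ν l j)) 0 := by
    refine HasDerivAt.fun_sum fun l _ => ?_
    have h := (hkl l).mul (he' l j)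
    simp only [zero_smul, add_zero] at h
    exact h
  have hfun : (fun t : ℝ => ((E (w + t • ν))ᴴ * Q (w + t • ν) * E (w + t • ν)) i j)
      = fun t : ℝ =>
          ∑ l, (∑ k, star (E (w + t • ν) k i) * Q (w + t • ν) k l) * E (w + t • ν) l j := by
    funext t
    simp [Matrix.mul_apply, Matrix.conjTranspose_apply]
  show deriv (fun t : ℝ => ((E (w + t • ν))ᴴ * Q (w + t • ν) * E (w + t • ν)) i j) 0 = _
  rw [hfun, htot.deriv]
  simp only [Matrix.add_apply, Matrix.mul_apply, Matrix.conjTranspose_apply,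
    Finset.sum_add_distrib, add_mul, Finset.sum_mul]

end Helpers

set_option maxHeartbeats 1600000 in
/-- **Proposition 4.11.** If `Q` is quasi-symmetric at `w` with respect to `ν`, then `−Q*` is
quasi-symmetric at `w` with respect to `−ν`; and if `E` is `C¹` near `w` with `E(w)`
invertible, then `E* Q E` is quasi-symmetric at `w` with respect to `ν`. -/
theorem quasiSymmetric_invariance {d N : ℕ}
    (Q E : EuclideanSpace ℝ (Fin d) → Matrix (Fin N) (Fin N) ℂ)
    (w ν : EuclideanSpace ℝ (Fin d))
    (hQ : ∀ i j, ContDiffAt ℝ 1 (fun x => Q x i j) w)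
    (hE : ∀ i j, ContDiffAt ℝ 1 (fun x => E x i j) w)
    (hEinv : IsUnit (E w))
    (hquasi : IsQuasiSymmetricAt Q w ν) :
    IsQuasiSymmetricAt (fun x => -(Q x)ᴴ) w (-ν) ∧
    IsQuasiSymmetricAt (fun x => (E x)ᴴ * Q x * E x) w ν := by
  obtain ⟨him, c, hc, C, hC, hineq⟩ := hquasi
  obtain ⟨KG, hKG0, hKG⟩ := T_bound (Q w - (Q w)ᴴ)
  constructor
  · constructor
    · intro u
      have h1 : (inner ℂ u (Matrix.toEuclideanLin (-(Q w)ᴴ) u) : ℂ)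
          = -(starRingEnd ℂ) (inner ℂ u (Matrix.toEuclideanLin (Q w) u) : ℂ) := by
        rw [map_neg, LinearMap.neg_apply, inner_neg_right, inner_conjTranspose]
      rw [h1]
      rw [Complex.neg_im, Complex.conj_im, neg_neg]
      exact him u
    · refine ⟨c/2, by positivity, 2*C + (4*C*KG)^2/(4*(c/2)), by positivity, fun u => ?_⟩
      rw [dirDeriv_negstar Q w ν hQ]
      have hre : (inner ℂ u (Matrix.toEuclideanLin (dirDeriv Q w ν)ᴴ u) : ℂ).re
          = (inner ℂ u (Matrix.toEuclideanLin (dirDeriv Q w ν) u) : ℂ).re := by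
        rw [inner_conjTranspose]; exact Complex.conj_re _
      rw [hre]
      have key := hineq u
      set x := ‖u‖ with hx
      set n := ‖Matrix.toEuclideanLin (Q w) u‖ with hn
      have hmeq : ‖Matrix.toEuclideanLin (-(Q w)ᴴ) u‖ = ‖Matrix.toEuclideanLin ((Q w)ᴴ) u‖ := by
        rw [map_neg, LinearMap.neg_apply, norm_neg]
      rw [hmeq]
      set m := ‖Matrix.toEuclideanLin ((Q w)ᴴ) u‖ with hm
      set g := ‖Matrix.toEuclideanLin (Q w - (Q w)ᴴ) u‖ with hg
      have hnm : n ≤ m + g := by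
        have : Matrix.toEuclideanLin (Q w) u
            = Matrix.toEuclideanLin ((Q w)ᴴ) u + Matrix.toEuclideanLin (Q w - (Q w)ᴴ) u := by
          rw [map_sub, LinearMap.sub_apply]; abel
        rw [hn, this]
        exact norm_add_le _ _
      have hg2 : g^2 ≤ 2*KG*(x*m) := by
        have h1 := skew_bound (Q w) KG hKG0.le hKG him u
        have h2 : (inner ℂ u (Matrix.toEuclideanLin (Q w) u) : ℂ).im ≤ x * m := by
          have h3 : (inner ℂ u (Matrix.toEuclideanLin (Q w) u) : ℂ).im
              = -(inner ℂ u (Matrix.toEuclideanLin ((Q w)ᴴ) u) : ℂ).im := by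
            rw [inner_conjTranspose, Complex.conj_im, neg_neg]
          rw [h3]
          calc -(inner ℂ u (Matrix.toEuclideanLin ((Q w)ᴴ) u) : ℂ).im
              ≤ ‖(inner ℂ u (Matrix.toEuclideanLin ((Q w)ᴴ) u) : ℂ)‖ := by
                rw [← norm_neg]
                exact Complex.re_le_norm ((inner ℂ u (Matrix.toEuclideanLin ((Q w)ᴴ) u) : ℂ) * Complex.I) |>.trans_eq (by simp) |>.trans_eq' (by simp [Complex.mul_re])
            _ ≤ x * m := norm_inner_le_norm _ _
        nlinarith [hKG0.le]
      have hAM := amgm (4*C*KG) (c/2) x m (by positivity)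
      have hm0 : 0 ≤ m := norm_nonneg _
      have hg0 : 0 ≤ g := norm_nonneg _
      have hn0 : 0 ≤ n := norm_nonneg _
      have hCn : C*n^2 ≤ 2*C*m^2 + (c/2)*x^2 + (4*C*KG)^2/(4*(c/2))*m^2 := by
        nlinarith [mul_le_mul_of_nonneg_left
            (mul_le_mul hnm hnm hn0 (by linarith : (0:ℝ) ≤ m+g)) hC,
          mul_le_mul_of_nonneg_left hg2 hC, hAM, sq_nonneg (m-g), hC, hm0, hg0,
          norm_nonneg u]
      linarith
  · obtain ⟨KB, hKB, hKBb⟩ := T_bound (dirDeriv E w ν)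
    obtain ⟨KE, hKE, hKEb⟩ := T_bound (E w)
    obtain ⟨K2, hK2, hK2b⟩ := T_bound (((E w)ᴴ)⁻¹)
    obtain ⟨KI, hKI, hKIb⟩ := T_bound ((E w)⁻¹)
    have hdet : IsUnit (E w).det := (Matrix.isUnit_iff_isUnit_det (E w)).mp hEinv
    have hdetH : IsUnit ((E w)ᴴ).det := by
      rw [Matrix.det_conjTranspose]; exact hdet.star
    have hsign : ∀ u : EuclideanSpace ℂ (Fin N),
        (inner ℂ u (Matrix.toEuclideanLin ((E w)ᴴ * Q w * E w) u) : ℂ)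
          = inner ℂ (Matrix.toEuclideanLin (E w) u)
              (Matrix.toEuclideanLin (Q w) (Matrix.toEuclideanLin (E w) u)) := by
      intro u
      rw [T_mul, T_mul, T_adj']
    constructor
    · intro u
      rw [hsign u]
      exact him _
    · set c2 : ℝ := c/(4*KI^2) with hc2def
      have hc2 : 0 < c2 := by positivity
      set M : ℝ := 2*KG*KE*K2 with hMdef
      set K' : ℝ := KB^2*M/(4*c2) with hK'def
      refine ⟨c2, hc2, C*K2^2 + (2*KB*K2)^2/(4*c2) + K'^2/(4*c2), by positivity, fun u => ?_⟩
      rw [dirDeriv_EQE Q E w ν hQ hE]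
      set v := Matrix.toEuclideanLin (E w) u with hv
      set b := Matrix.toEuclideanLin (dirDeriv E w ν) u with hb
      -- decompose the inner ℂ product with the derivative
      have hdec : (inner ℂ u (Matrix.toEuclideanLin
            ((dirDeriv E w ν)ᴴ * Q w * E w + (E w)ᴴ * (dirDeriv Q w ν) * E w
              + (E w)ᴴ * Q w * (dirDeriv E w ν)) u) : ℂ)
          = inner ℂ b (Matrix.toEuclideanLin (Q w) v)
            + inner ℂ v (Matrix.toEuclideanLin (dirDeriv Q w ν) v)
            + inner ℂ v (Matrix.toEuclideanLin (Q w) b) := by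
        rw [map_add, map_add, LinearMap.add_apply, LinearMap.add_apply,
          inner_add_right, inner_add_right]
        congr 1
        congr 1
        · rw [T_mul, T_mul, T_adj']
        · rw [T_mul, T_mul, T_adj']
        · rw [T_mul, T_mul, T_adj']
      rw [hdec]
      simp only [Complex.add_re]
      -- main term
      have hmain := hineq v
      -- cross terms
      have hcross : (inner ℂ (b : EuclideanSpace ℂ (Fin N)) (Matrix.toEuclideanLin (Q w) v) : ℂ).re
            + (inner ℂ (v : EuclideanSpace ℂ (Fin N)) (Matrix.toEuclideanLin (Q w) b) : ℂ).re
          ≥ -(‖b‖ * (2*‖Matrix.toEuclideanLin (Q w) v‖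
              + ‖Matrix.toEuclideanLin (Q w - (Q w)ᴴ) v‖)) := by
        have h1 : (inner ℂ (v : EuclideanSpace ℂ (Fin N)) (Matrix.toEuclideanLin (Q w) b) : ℂ).re
            = (inner ℂ (b : EuclideanSpace ℂ (Fin N)) (Matrix.toEuclideanLin ((Q w)ᴴ) v) : ℂ).re := by
          rw [← T_adj (Q w) v b, ← inner_conj_symm, Complex.conj_re]
        rw [h1, ← Complex.add_re, ← inner_add_right]
        have h2 : Matrix.toEuclideanLin (Q w) v + Matrix.toEuclideanLin ((Q w)ᴴ) v
            = (2:ℂ) • Matrix.toEuclideanLin (Q w) v - Matrix.toEuclideanLin (Q w - (Q w)ᴴ) v := by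
          rw [map_sub, LinearMap.sub_apply, two_smul]
          abel
        rw [h2]
        set z : EuclideanSpace ℂ (Fin N) :=
          (2:ℂ) • Matrix.toEuclideanLin (Q w) v - Matrix.toEuclideanLin (Q w - (Q w)ᴴ) v with hz
        have h3 : ‖z‖ ≤ 2*‖Matrix.toEuclideanLin (Q w) v‖
            + ‖Matrix.toEuclideanLin (Q w - (Q w)ᴴ) v‖ := by
          refine (norm_sub_le _ _).trans ?_
          rw [norm_smul]
          simp
        have h4 : ‖(inner ℂ (b : EuclideanSpace ℂ (Fin N)) z : ℂ)‖ ≤ ‖b‖ * ‖z‖ :=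
          norm_inner_le_norm _ _
        have h5 : |(inner ℂ (b : EuclideanSpace ℂ (Fin N)) z : ℂ).re|
            ≤ ‖(inner ℂ (b : EuclideanSpace ℂ (Fin N)) z : ℂ)‖ := by
          exact Complex.abs_re_le_norm _
        have h6 := mul_le_mul_of_nonneg_left h3 (norm_nonneg (b : EuclideanSpace ℂ (Fin N)))
        have h7 := neg_abs_le ((inner ℂ (b : EuclideanSpace ℂ (Fin N)) z : ℂ).re)
        linarith
      -- norms and bounds
      set x := ‖u‖ with hxdef
      set nv := ‖(v : EuclideanSpace ℂ (Fin N))‖ with hnvdef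
      set na := ‖Matrix.toEuclideanLin (Q w) v‖ with hnadef
      set gn := ‖Matrix.toEuclideanLin (Q w - (Q w)ᴴ) v‖ with hgndef
      set nb := ‖(b : EuclideanSpace ℂ (Fin N))‖ with hnbdef
      set tn := ‖Matrix.toEuclideanLin ((E w)ᴴ * Q w * E w) u‖ with htndef
      have hnb : nb ≤ KB * x := hKBb u
      have hnv : nv ≤ KE * x := hKEb u
      have hxKI : x ≤ KI * nv := by
        have h1 : Matrix.toEuclideanLin ((E w)⁻¹) v = u := by
          rw [hv, ← T_mul, Matrix.nonsing_inv_mul _ hdet, T_one]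
        calc x = ‖Matrix.toEuclideanLin ((E w)⁻¹) v‖ := by rw [h1]
          _ ≤ KI * nv := hKIb v
      have hna : na ≤ K2 * tn := by
        have h1 : Matrix.toEuclideanLin (Q w) v
            = Matrix.toEuclideanLin (((E w)ᴴ)⁻¹) (Matrix.toEuclideanLin ((E w)ᴴ * Q w * E w) u) := by
          rw [hv, ← T_mul, ← T_mul]
          congr 1
          rw [show (E w)ᴴ * Q w * E w = (E w)ᴴ * (Q w * E w) from mul_assoc _ _ _,
            Matrix.nonsing_inv_mul_cancel_left _ _ hdetH]
        rw [hnadef, h1]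
        exact hK2b _
      have hgn2 : gn^2 ≤ 2*KG*(na*nv) := by
        have h1 := skew_bound (Q w) KG hKG0.le hKG him v
        have h2 : (inner ℂ (v : EuclideanSpace ℂ (Fin N)) (Matrix.toEuclideanLin (Q w) v) : ℂ).im
            ≤ nv * na := by
          calc (inner ℂ (v : EuclideanSpace ℂ (Fin N)) (Matrix.toEuclideanLin (Q w) v) : ℂ).im
              ≤ ‖(inner ℂ (v : EuclideanSpace ℂ (Fin N)) (Matrix.toEuclideanLin (Q w) v) : ℂ)‖ := by
                have ha1 := Complex.abs_im_le_norm
                  (inner ℂ (v : EuclideanSpace ℂ (Fin N)) (Matrix.toEuclideanLin (Q w) v) : ℂ)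
                have ha2 := le_abs_self
                  (inner ℂ (v : EuclideanSpace ℂ (Fin N)) (Matrix.toEuclideanLin (Q w) v) : ℂ).im
                linarith
            _ ≤ nv * na := norm_inner_le_norm _ _
        nlinarith [hKG0.le]
      -- arithmetic
      have hx0 : 0 ≤ x := norm_nonneg _
      have hnv0 : 0 ≤ nv := norm_nonneg _
      have hna0 : 0 ≤ na := norm_nonneg _
      have hgn0 : 0 ≤ gn := norm_nonneg _
      have hnb0 : 0 ≤ nb := norm_nonneg _
      have htn0 : 0 ≤ tn := norm_nonneg _
      clear_value x nv na gn nb tn v b K' M c2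
      have h1 : c2 * x^2 ≤ (c/4) * nv^2 := by
        have hxx : x^2 ≤ KI^2 * nv^2 := by nlinarith
        rw [hc2def]
        rw [div_mul_eq_mul_div, div_le_iff₀ (by positivity)]
        calc c * x^2 ≤ c * (KI^2 * nv^2) := by nlinarith
          _ = c/4 * nv^2 * (4*KI^2) := by ring
      have h2 : C*na^2 ≤ C*K2^2*tn^2 := by
        nlinarith [mul_le_mul_of_nonneg_left
          (mul_le_mul hna hna hna0 (by positivity : (0:ℝ) ≤ K2*tn)) hC]
      have h3 : nb*(2*na) ≤ 2*KB*K2*(x*tn) := by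
        nlinarith [mul_le_mul hnb hna hna0 (by positivity : (0:ℝ) ≤ KB*x)]
      have h4 := amgm (2*KB*K2) c2 x tn hc2
      have h5 : nb*gn ≤ 2*c2*x^2 + K'^2/(4*c2)*tn^2 := by
        have h51 : nb*gn ≤ KB*(x*gn) := by nlinarith
        have h52 := amgm KB c2 x gn hc2
        have h53 : KB^2/(4*c2)*gn^2 ≤ KB^2/(4*c2)*(M*(tn*x)) := by
          have : gn^2 ≤ M*(tn*x) := by
            calc gn^2 ≤ 2*KG*(na*nv) := hgn2
              _ ≤ 2*KG*((K2*tn)*(KE*x)) := by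
                  nlinarith [mul_le_mul hna hnv hnv0 (by positivity : (0:ℝ) ≤ K2*tn), hKG0.le]
              _ = M*(tn*x) := by rw [hMdef]; ring
          have hpos : (0:ℝ) ≤ KB^2/(4*c2) := by positivity
          nlinarith [mul_le_mul_of_nonneg_left this hpos]
        have h54 : KB^2/(4*c2)*(M*(tn*x)) = K'*(x*tn) := by rw [hK'def]; field_simp
        have h55 := amgm K' c2 x tn hc2
        linarith
      have hexp : nb*(2*na + gn) = nb*(2*na) + nb*gn := by ring
      linarith [hmain, hcross, h1, h2, h3, h4, h5, hexp]
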